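/- Under assumption (i) (joint independence of the instrument from all potential outcomes), for any two distinct instrument values z ≠ z̃ in {1,…,K} and any i, j ∈ {0,1}: P(Y(x_i) = j) ≤ P(X = i, Y = j | Z = z) + P(X = 1−i, Y = 0 | Z = z) + P(X = i, Y = j | Z = z̃) + P(X = 1−i, Y = 1 | Z = z̃). -/

import Mathlib

open MeasureTheory ProbabilityTheory

/-- Under assumption (i) (joint independence of the instrument from all
potential outcomes), for any two distinct instrument values `z ≠ z̃` and any `i, j ∈ {0,1}`:
`P(Y(xᵢ) = j) ≤ P(X = i, Y = j | Z = z) + P(X = 1−i, Y = 0 | Z = z)`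
`+ P(X = i, Y = j | Z = z̃) + P(X = 1−i, Y = 1 | Z = z̃)`. -/
theorem stmt6
    {Ω : Type*} [MeasurableSpace Ω] (P : Measure Ω) [IsProbabilityMeasure P]
    (K : ℕ) (hK : 2 ≤ K)
    (Z : Ω → Fin K) (Xz : Fin K → Ω → Fin 2) (Y0 Y1 : Ω → Fin 2)
    (hZ : Measurable Z) (hXz : ∀ z, Measurable (Xz z))
    (hY0 : Measurable Y0) (hY1 : Measurable Y1)
    (X : Ω → Fin 2) (hX : ∀ ω, X ω = Xz (Z ω) ω)
    (Y : Ω → Fin 2) (hY : ∀ ω, Y ω = if X ω = 0 then Y0 ω else Y1 ω)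
    (hpos : ∀ z, 0 < P (Z ⁻¹' {z}))
    (hindep : IndepFun Z (fun ω => (Y0 ω, Y1 ω, fun z => Xz z ω)) P) :
    ∀ (z ztilde : Fin K), z ≠ ztilde → ∀ (i j : Fin 2),
      (P {ω | (if i = 0 then Y0 ω else Y1 ω) = j}).toReal ≤
        (P[|Z ⁻¹' {z}] {ω | X ω = i ∧ Y ω = j}).toReal +
          (P[|Z ⁻¹' {z}] {ω | X ω = 1 - i ∧ Y ω = 0}).toReal +
          (P[|Z ⁻¹' {ztilde}] {ω | X ω = i ∧ Y ω = j}).toReal +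
          (P[|Z ⁻¹' {ztilde}] {ω | X ω = 1 - i ∧ Y ω = 1}).toReal := by
  intro z ztilde _ i j
  -- key: conditional probability equals unconditional probability of the potential-world event
  have key : ∀ (ζ : Fin K) (a b : Fin 2),
      P[|Z ⁻¹' {ζ}] {ω | X ω = a ∧ Y ω = b}
        = P {ω | Xz ζ ω = a ∧ (if a = 0 then Y0 ω else Y1 ω) = b} := by
    intro ζ a b
    have hs : MeasurableSet (Z ⁻¹' {ζ}) := hZ (measurableSet_singleton ζ)
    rw [cond_apply hs]
    set W : Ω → Fin 2 × Fin 2 × (Fin K → Fin 2) := fun ω => (Y0 ω, Y1 ω, fun z => Xz z ω)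
      with hW
    set T : Set (Fin 2 × Fin 2 × (Fin K → Fin 2)) :=
      {p | p.2.2 ζ = a ∧ (if a = 0 then p.1 else p.2.1) = b} with hT
    have hTm : MeasurableSet T := by
      have h1 : Measurable fun p : Fin 2 × Fin 2 × (Fin K → Fin 2) => p.2.2 ζ :=
        ((measurable_pi_apply ζ).comp (measurable_snd.comp measurable_snd))
      have h2 : Measurable fun p : Fin 2 × Fin 2 × (Fin K → Fin 2) =>
          (if a = 0 then p.1 else p.2.1) := by
        by_cases ha : a = 0 <;> simp [ha] <;> measurability
      exact (h1 (measurableSet_singleton a)).inter (h2 (measurableSet_singleton b))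
    have hset : Z ⁻¹' {ζ} ∩ {ω | X ω = a ∧ Y ω = b} = Z ⁻¹' {ζ} ∩ W ⁻¹' T := by
      ext ω
      simp only [Set.mem_inter_iff, Set.mem_preimage, Set.mem_singleton_iff, Set.mem_setOf_eq,
        hW, hT]
      constructor
      · rintro ⟨hζ, hXa, hYb⟩
        rw [hY, hXa] at hYb
        rw [hX, hζ] at hXa
        exact ⟨hζ, hXa, hYb⟩
      · rintro ⟨hζ, hXa, hYb⟩
        have hXa' : X ω = a := by rw [hX, hζ]; exact hXa
        refine ⟨hζ, hXa', ?_⟩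
        rw [hY, hXa']
        exact hYb
    have hpre : W ⁻¹' T = {ω | Xz ζ ω = a ∧ (if a = 0 then Y0 ω else Y1 ω) = b} := by
      ext ω; simp [hW, hT]
    rw [hset, hindep.measure_inter_preimage_eq_mul _ _ (measurableSet_singleton ζ) hTm,
      ← mul_assoc, ENNReal.inv_mul_cancel (hpos ζ).ne' (measure_ne_top P _), one_mul, hpre]
  rw [key, key, key, key]
  set A := {ω | Xz z ω = i ∧ (if i = 0 then Y0 ω else Y1 ω) = j} with hA
  set B := {ω | Xz z ω = 1 - i ∧ (if (1 - i : Fin 2) = 0 then Y0 ω else Y1 ω) = 0} with hB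
  set C := {ω | Xz ztilde ω = i ∧ (if i = 0 then Y0 ω else Y1 ω) = j} with hC
  set D := {ω | Xz ztilde ω = 1 - i ∧ (if (1 - i : Fin 2) = 0 then Y0 ω else Y1 ω) = 1} with hD
  have hne : ∀ a b : Fin 2, a ≠ b → a = 1 - b := by decide
  have hsub : {ω | (if i = 0 then Y0 ω else Y1 ω) = j} ⊆ A ∪ B ∪ C ∪ D := by
    intro ω hω
    simp only [Set.mem_setOf_eq] at hω
    by_cases h1 : Xz z ω = i
    · exact Or.inl (Or.inl (Or.inl ⟨h1, hω⟩))
    · have h1' : Xz z ω = 1 - i := hne _ _ h1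
      by_cases h2 : (if (1 - i : Fin 2) = 0 then Y0 ω else Y1 ω) = 0
      · exact Or.inl (Or.inl (Or.inr ⟨h1', h2⟩))
      · have h2' : (if (1 - i : Fin 2) = 0 then Y0 ω else Y1 ω) = 1 := by
          have := hne _ _ h2; simpa using this
        by_cases h3 : Xz ztilde ω = i
        · exact Or.inl (Or.inr ⟨h3, hω⟩)
        · exact Or.inr ⟨hne _ _ h3, h2'⟩
  have hle : P {ω | (if i = 0 then Y0 ω else Y1 ω) = j} ≤ P A + P B + P C + P D :=
    calc P {ω | (if i = 0 then Y0 ω else Y1 ω) = j} ≤ P (A ∪ B ∪ C ∪ D) := measure_mono hsub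
    _ ≤ P (A ∪ B ∪ C) + P D := measure_union_le _ _
    _ ≤ (P (A ∪ B) + P C) + P D := by gcongr; exact measure_union_le _ _
    _ ≤ ((P A + P B) + P C) + P D :=
        by gcongr; exact measure_union_le _ _
  have hfin : ∀ S : Set Ω, P S ≠ ⊤ := fun S => measure_ne_top P S
  rw [← ENNReal.toReal_add (hfin A) (hfin B),
    ← ENNReal.toReal_add (ENNReal.add_ne_top.mpr ⟨hfin A, hfin B⟩) (hfin C),
    ← ENNReal.toReal_add
      (ENNReal.add_ne_top.mpr ⟨ENNReal.add_ne_top.mpr ⟨hfin A, hfin B⟩, hfin C⟩) (hfin D)]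
  exact ENNReal.toReal_le_toReal (hfin _)
    (ENNReal.add_ne_top.mpr
      ⟨ENNReal.add_ne_top.mpr ⟨ENNReal.add_ne_top.mpr ⟨hfin A, hfin B⟩, hfin C⟩, hfin D⟩)
    |>.mpr hle
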